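/- Let 𝔉 = 𝔉(X) be the free profinite group on a finite set X with |X| > 1. Then for any x ∈ X and any positive integer m, the centralizer C_𝔉(xᵐ) of xᵐ in 𝔉 coincides with the closure in 𝔉 of the cyclic subgroup ⟨x⟩. -/

import Mathlib

set_option linter.unusedVariables false

namespace CSP

/-! ### The profinite completion of a discrete group -/

/-- The index set for the profinite completion: finite-index normal subgroups. -/
abbrev FinQuot (G : Type*) [Group G] : Type _ :=
  {N : Subgroup G // N.Normal ∧ N.FiniteIndex}

variable (G : Type*) [Group G]

instance (N : FinQuot G) : (N.1).Normal := N.2.1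

instance (N : FinQuot G) : TopologicalSpace (G ⧸ N.1) := ⊥

instance (N : FinQuot G) : DiscreteTopology (G ⧸ N.1) := ⟨rfl⟩

instance (N : FinQuot G) : IsTopologicalGroup (G ⧸ N.1) where
  continuous_mul := continuous_of_discreteTopology
  continuous_inv := continuous_of_discreteTopology

/-- The diagonal homomorphism from `G` into the product of all of its finite quotients. -/
def toFinQuots : G →* (∀ N : FinQuot G, G ⧸ N.1) :=
  Pi.monoidHom fun N => QuotientGroup.mk' N.1

/-- The profinite completion of `G` as a subgroup of the product of the finite
quotients of `G`: the closure of the image of the diagonal map. -/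
def profSubgroup : Subgroup (∀ N : FinQuot G, G ⧸ N.1) :=
  (toFinQuots G).range.topologicalClosure

/-- The profinite completion of a (discrete) group `G`, as a topological group.
For `G = F(X)` a free group on a finite set `X`, this is the free profinite group
`𝔉(X)` on `X`. -/
abbrev ProfComp : Type _ := ↥(profSubgroup G)

/-- The canonical homomorphism from `G` to its profinite completion.  For a free
group this is the embedding of `F(X)` into the free profinite group `𝔉(X)`. -/
def unit : G →* ProfComp G :=
  (toFinQuots G).codRestrict _ fun g =>
    Subgroup.le_topologicalClosure _ (MonoidHom.mem_range.2 ⟨g, rfl⟩)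

set_option maxHeartbeats 1000000

section MagnusAux

set_option linter.unusedSectionVars false

variable (e : ℕ) (K : Type*) [Group K]


/-- Magnus-type group: `K × MonoidAlgebra (ZMod e) K` with `(k,v)(l,w) = (kl, v + k·w)`. -/
def Mag : Type _ := K × MonoidAlgebra (ZMod e) K

namespace Mag

variable {e K}

noncomputable instance : Mul (Mag e K) :=
  ⟨fun a b => (a.1 * b.1, a.2 + MonoidAlgebra.single a.1 1 * b.2)⟩

noncomputable instance : One (Mag e K) := ⟨((1 : K), (0 : MonoidAlgebra (ZMod e) K))⟩

noncomputable instance : Inv (Mag e K) :=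
  ⟨fun a => (a.1⁻¹, -(MonoidAlgebra.single a.1⁻¹ 1 * a.2))⟩

/-- constructor -/
noncomputable def mk (a : K) (b : MonoidAlgebra (ZMod e) K) : Mag e K := (a, b)

@[simp] lemma mk_fst (a : K) (b : MonoidAlgebra (ZMod e) K) : (mk a b).1 = a := rfl
@[simp] lemma mk_snd (a : K) (b : MonoidAlgebra (ZMod e) K) : (mk a b).2 = b := rfl

lemma mul_def (a b : Mag e K) :
    a * b = (a.1 * b.1, a.2 + MonoidAlgebra.single a.1 1 * b.2) := rfl

lemma one_def : (1 : Mag e K) = ((1 : K), (0 : MonoidAlgebra (ZMod e) K)) := rfl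

lemma single_single (k l : K) :
    (MonoidAlgebra.single (k * l) (1 : ZMod e)) =
      MonoidAlgebra.single k 1 * MonoidAlgebra.single l 1 := by
  rw [MonoidAlgebra.single_mul_single, one_mul]

noncomputable instance : Group (Mag e K) where
  mul_assoc a b c := by
    apply Prod.ext
    · show (a.1 * b.1) * c.1 = a.1 * (b.1 * c.1); exact mul_assoc _ _ _
    · show (a.2 + MonoidAlgebra.single a.1 1 * b.2) +
          MonoidAlgebra.single (a.1 * b.1) 1 * c.2
        = a.2 + MonoidAlgebra.single a.1 1 *
            (b.2 + MonoidAlgebra.single b.1 1 * c.2)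
      rw [single_single, mul_add, add_assoc, mul_assoc]
  one_mul a := by
    apply Prod.ext
    · show 1 * a.1 = a.1; exact one_mul _
    · show 0 + MonoidAlgebra.single 1 1 * a.2 = a.2
      rw [zero_add, MonoidAlgebra.one_def.symm, one_mul]
  mul_one a := by
    apply Prod.ext
    · show a.1 * 1 = a.1; exact mul_one _
    · show a.2 + MonoidAlgebra.single a.1 1 * 0 = a.2
      rw [mul_zero, add_zero]
  inv_mul_cancel a := by
    apply Prod.ext
    · show a.1⁻¹ * a.1 = 1; exact inv_mul_cancel _
    · show -(MonoidAlgebra.single a.1⁻¹ 1 * a.2) +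
          MonoidAlgebra.single a.1⁻¹ 1 * a.2 = 0
      exact neg_add_cancel _

/-- First projection as a monoid hom. -/
noncomputable def fst : Mag e K →* K where
  toFun a := a.1
  map_one' := rfl
  map_mul' _ _ := rfl

lemma fst_apply (a : Mag e K) : fst a = a.1 := rfl

instance [Finite K] [NeZero e] : Finite (Mag e K) := by
  have : Finite (MonoidAlgebra (ZMod e) K) :=
    Finite.of_equiv (K → ZMod e) (Finsupp.equivFunOnFinite.symm.trans MonoidAlgebra.coeffEquiv.symm)
  show Finite (K × MonoidAlgebra (ZMod e) K)
  infer_instance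

end Mag


open Finset in


lemma magkey {K : Type*} [Group K] [Finite K] (xb k : K) (m : ℕ) (hm : 0 < m)
    (e : ℕ) (he : e = orderOf (xb ^ m) * m + 1)
    (v : MonoidAlgebra (ZMod e) K)
    (E : v + MonoidAlgebra.single k 1 * (∑ s ∈ Finset.range m, MonoidAlgebra.single (xb ^ s) 1)
       = (∑ s ∈ Finset.range m, MonoidAlgebra.single (xb ^ s) 1)
         + MonoidAlgebra.single (xb ^ m) 1 * v) :
    ∃ t : ℕ, k = xb ^ t := by
  classical
  by_contra hcon
  push_neg at hcon
  obtain ⟨c, hc⟩ : ∃ c, c = orderOf (xb ^ m) := ⟨_, rfl⟩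
  rw [← hc] at he
  have hc0 : 0 < c := hc ▸ orderOf_pos _
  obtain ⟨σ, hσ⟩ : ∃ σ : MonoidAlgebra (ZMod e) K,
      σ = ∑ s ∈ Finset.range m, MonoidAlgebra.single (xb ^ s) 1 := ⟨_, rfl⟩
  obtain ⟨T, hT⟩ : ∃ T : MonoidAlgebra (ZMod e) K,
      T = ∑ j ∈ Finset.range c, MonoidAlgebra.single ((xb ^ m) ^ j) (1 : ZMod e) := ⟨_, rfl⟩
  rw [← hσ] at E
  have hTA : T * MonoidAlgebra.single (xb ^ m) (1 : ZMod e) = T := by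
    rw [hT, Finset.sum_mul]
    have step : ∀ j, MonoidAlgebra.single ((xb ^ m) ^ j) (1 : ZMod e) *
        MonoidAlgebra.single (xb ^ m) 1 = MonoidAlgebra.single ((xb ^ m) ^ (j + 1)) 1 := by
      intro j; rw [MonoidAlgebra.single_mul_single, one_mul, pow_succ]
    simp only [step]
    have h1 := Finset.sum_range_succ
      (fun j => MonoidAlgebra.single ((xb ^ m) ^ j) (1 : ZMod e)) c
    have h2 := Finset.sum_range_succ'
      (fun j => MonoidAlgebra.single ((xb ^ m) ^ j) (1 : ZMod e)) c
    have h0 : MonoidAlgebra.single ((xb ^ m) ^ c) (1 : ZMod e) =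
        MonoidAlgebra.single ((xb ^ m) ^ 0) 1 := by
      rw [hc, pow_orderOf_eq_one, pow_zero]
    have h3 := h2.symm.trans h1
    rw [h0, pow_zero] at h3
    exact add_right_cancel h3
  have E2 := congrArg (fun z => T * z) E
  simp only [mul_add, ← mul_assoc, hTA] at E2
  have E3 : T * MonoidAlgebra.single k 1 * σ = T * σ := by
    rw [add_comm (T * σ) (T * v)] at E2
    exact add_left_cancel E2
  have hL : T * MonoidAlgebra.single k (1 : ZMod e) * σ
      = ∑ j ∈ Finset.range c, ∑ s ∈ Finset.range m,
          MonoidAlgebra.single ((xb ^ m) ^ j * (k * xb ^ s)) (1 : ZMod e) := by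
    rw [hT, hσ]
    rw [Finset.sum_mul, Finset.sum_mul]
    refine Finset.sum_congr rfl fun j _ => ?_
    rw [Finset.mul_sum]
    refine Finset.sum_congr rfl fun s _ => ?_
    rw [mul_assoc, MonoidAlgebra.single_mul_single, MonoidAlgebra.single_mul_single,
      one_mul, one_mul]
  have hR : T * σ = ∑ j ∈ Finset.range c, ∑ s ∈ Finset.range m,
      MonoidAlgebra.single ((xb ^ m) ^ j * xb ^ s) (1 : ZMod e) := by
    rw [hT, hσ, Finset.sum_mul]
    refine Finset.sum_congr rfl fun j _ => ?_
    rw [Finset.mul_sum]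
    refine Finset.sum_congr rfl fun s _ => ?_
    rw [MonoidAlgebra.single_mul_single, one_mul]
  rw [hL, hR] at E3
  have E3' : (∑ j ∈ Finset.range c, ∑ s ∈ Finset.range m,
        Finsupp.single ((xb ^ m) ^ j * (k * xb ^ s)) (1 : ZMod e))
      = ∑ j ∈ Finset.range c, ∑ s ∈ Finset.range m,
        Finsupp.single ((xb ^ m) ^ j * xb ^ s) (1 : ZMod e) := by
    simpa only [MonoidAlgebra.coeff_sum, MonoidAlgebra.coeff_single] using congrArg MonoidAlgebra.coeff E3
  have hEval := congrArg (fun z : K →₀ ZMod e => z k) E3'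
  simp only [Finset.sum_apply', Finsupp.single_apply] at hEval
  have hRz : (∑ j ∈ Finset.range c, ∑ s ∈ Finset.range m,
      (if (xb ^ m) ^ j * xb ^ s = k then (1 : ZMod e) else 0)) = 0 := by
    refine Finset.sum_eq_zero fun j _ => Finset.sum_eq_zero fun s _ => ?_
    refine if_neg fun h => hcon (m * j + s) ?_
    rw [pow_add, pow_mul]; exact h.symm
  rw [hRz] at hEval
  have hLc : (∑ j ∈ Finset.range c, ∑ s ∈ Finset.range m,
      (if (xb ^ m) ^ j * (k * xb ^ s) = k then (1 : ZMod e) else 0))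
      = (((Finset.range c ×ˢ Finset.range m).filter
          (fun p => (xb ^ m) ^ p.1 * (k * xb ^ p.2) = k)).card : ZMod e) := by
    rw [← Finset.sum_product']
    exact Finset.sum_boole _ _
  rw [hLc] at hEval
  have hdvd : e ∣ ((Finset.range c ×ˢ Finset.range m).filter
      (fun p => (xb ^ m) ^ p.1 * (k * xb ^ p.2) = k)).card :=
    (ZMod.natCast_eq_zero_iff _ _).1 hEval
  have hpos : 0 < ((Finset.range c ×ˢ Finset.range m).filter
      (fun p => (xb ^ m) ^ p.1 * (k * xb ^ p.2) = k)).card := by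
    refine Finset.card_pos.2 ⟨(0, 0), Finset.mem_filter.2 ⟨?_, by simp⟩⟩
    simp [Finset.mem_product, hc0, hm]
  have hle : ((Finset.range c ×ˢ Finset.range m).filter
      (fun p => (xb ^ m) ^ p.1 * (k * xb ^ p.2) = k)).card ≤ c * m := by
    calc _ ≤ (Finset.range c ×ˢ Finset.range m).card := Finset.card_filter_le _ _
    _ = c * m := by rw [Finset.card_product, Finset.card_range, Finset.card_range]
  have := Nat.le_of_dvd hpos hdvd
  omega



lemma key (X : Type) (x : X) (m : ℕ) (hm : 0 < m)
    (N : Subgroup (FreeGroup X)) [N.Normal] [N.FiniteIndex] :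
    ∃ M : Subgroup (FreeGroup X), M.Normal ∧ M.FiniteIndex ∧ M ≤ N ∧
      ∀ f : FreeGroup X,
        (f * FreeGroup.of x ^ m)⁻¹ * (FreeGroup.of x ^ m * f) ∈ M →
        ∃ t : ℕ, QuotientGroup.mk' N f = QuotientGroup.mk' N (FreeGroup.of x) ^ t := by
  classical
  haveI : Finite (FreeGroup X ⧸ N) := N.finite_quotient_of_finiteIndex
  obtain ⟨xb, hxb⟩ : ∃ xb : FreeGroup X ⧸ N, xb = QuotientGroup.mk' N (FreeGroup.of x) :=
    ⟨_, rfl⟩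
  obtain ⟨e, he⟩ : ∃ e : ℕ, e = orderOf (xb ^ m) * m + 1 := ⟨_, rfl⟩
  haveI : NeZero e := ⟨by omega⟩
  obtain ⟨φ, hφ⟩ : ∃ φ : FreeGroup X →* Mag e (FreeGroup X ⧸ N),
      φ = FreeGroup.lift fun i =>
        Mag.mk (QuotientGroup.mk' N (FreeGroup.of i)) (if i = x then 1 else 0) := ⟨_, rfl⟩
  have hgen : ∀ i, φ (FreeGroup.of i) =
      Mag.mk (QuotientGroup.mk' N (FreeGroup.of i)) (if i = x then 1 else 0) := by
    intro i; rw [hφ]; exact FreeGroup.lift_apply_of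
  have hfst : ∀ w : FreeGroup X, (φ w).1 = QuotientGroup.mk' N w := by
    have hcomp : (Mag.fst).comp φ = QuotientGroup.mk' N := by
      refine FreeGroup.ext_hom _ _ fun i => ?_
      rw [MonoidHom.comp_apply, hgen i]; rfl
    intro w
    have := congrArg (fun ψ : FreeGroup X →* (FreeGroup X ⧸ N) => ψ w) hcomp
    simpa [Mag.fst_apply] using this
  refine ⟨MonoidHom.ker φ, inferInstance, inferInstance, ?_, ?_⟩
  · intro w hw
    have h1 : (φ w).1 = 1 := by rw [MonoidHom.mem_ker.1 hw]; rfl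
    have := hfst w
    rw [h1] at this
    exact (QuotientGroup.eq_one_iff w).1 this.symm
  intro f hf
  -- the commutation equation in Mag
  have hcomm : φ f * φ (FreeGroup.of x) ^ m = φ (FreeGroup.of x) ^ m * φ f := by
    have h1 : φ ((f * FreeGroup.of x ^ m)⁻¹ * (FreeGroup.of x ^ m * f)) = 1 :=
      MonoidHom.mem_ker.1 hf
    rw [map_mul, map_inv, inv_mul_eq_one] at h1
    rw [map_mul, map_mul, map_pow] at h1
    exact h1
  -- the power formula
  have hpow : ∀ n : ℕ, φ (FreeGroup.of x) ^ n =
      Mag.mk (xb ^ n) (∑ s ∈ Finset.range n, MonoidAlgebra.single (xb ^ s) 1) := by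
    intro n
    induction n with
    | zero =>
      rw [pow_zero, pow_zero, Finset.range_zero, Finset.sum_empty]
      rfl
    | succ n ih =>
      rw [pow_succ, ih, hgen x, if_pos rfl, Mag.mul_def]
      apply Prod.ext
      · show xb ^ n * QuotientGroup.mk' N (FreeGroup.of x) = xb ^ (n + 1)
        rw [← hxb, pow_succ]
      · show (∑ s ∈ Finset.range n, MonoidAlgebra.single (xb ^ s) 1) +
            MonoidAlgebra.single (xb ^ n) 1 * 1
          = ∑ s ∈ Finset.range (n + 1), MonoidAlgebra.single (xb ^ s) 1
        rw [mul_one, Finset.sum_range_succ]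
  rw [hpow m] at hcomm
  have E := congrArg (fun z : Mag e (FreeGroup X ⧸ N) => z.2) hcomm
  have E' : (φ f).2 + MonoidAlgebra.single (QuotientGroup.mk' N f) 1 *
        (∑ s ∈ Finset.range m, MonoidAlgebra.single (xb ^ s) 1)
      = (∑ s ∈ Finset.range m, MonoidAlgebra.single (xb ^ s) 1)
        + MonoidAlgebra.single (xb ^ m) 1 * (φ f).2 := by
    have h2 := E
    rw [Mag.mul_def, Mag.mul_def] at h2
    simpa [hfst f] using h2
  obtain ⟨t, ht⟩ := magkey xb (QuotientGroup.mk' N f) m hm e he (φ f).2 E'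
  exact ⟨t, by rw [ht, hxb]⟩


end MagnusAux

section Coherence

variable {G}


lemma toFinQuots_apply (g : G) (N : FinQuot G) :
    toFinQuots G g N = QuotientGroup.mk' N.1 g := rfl

/-- Coherence of the components of an element of the profinite completion. -/
lemma coherence (g : ProfComp G) {M N : FinQuot G} (h : M.1 ≤ N.1)
    (hc : M.1 ≤ Subgroup.comap (MonoidHom.id G) N.1) :
    QuotientGroup.map M.1 N.1 (MonoidHom.id G) hc
        ((g : ∀ N' : FinQuot G, G ⧸ N'.1) M)
      = (g : ∀ N' : FinQuot G, G ⧸ N'.1) N := by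
  have hg : (g : ∀ N' : FinQuot G, G ⧸ N'.1) ∈ closure (Set.range (toFinQuots G)) := by
    have h3 : (g : ∀ N' : FinQuot G, G ⧸ N'.1)
        ∈ ((toFinQuots G).range.topologicalClosure : Subgroup _) := g.2
    have h2 : (((toFinQuots G).range.topologicalClosure : Subgroup _) : Set _)
        = closure (Set.range (toFinQuots G)) := by
      rw [Subgroup.topologicalClosure_coe, MonoidHom.coe_range]
    rwa [← SetLike.mem_coe, h2] at h3
  have hclosed : IsClosed {p : ∀ N' : FinQuot G, G ⧸ N'.1 |
      QuotientGroup.map M.1 N.1 (MonoidHom.id G) hc (p M) = p N} := by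
    apply isClosed_eq
    · exact Continuous.comp continuous_of_discreteTopology (continuous_apply M)
    · exact continuous_apply N
  have hsub : Set.range (toFinQuots G) ⊆ {p : ∀ N' : FinQuot G, G ⧸ N'.1 |
      QuotientGroup.map M.1 N.1 (MonoidHom.id G) hc (p M) = p N} := by
    rintro _ ⟨a, rfl⟩
    show QuotientGroup.map M.1 N.1 (MonoidHom.id G) hc (QuotientGroup.mk' M.1 a)
      = QuotientGroup.mk' N.1 a
    rw [QuotientGroup.map_mk']
    rfl
  exact closure_minimal hsub hclosed hg

lemma normal_inf {A B : Subgroup G} (hA : A.Normal) (hB : B.Normal) : (A ⊓ B).Normal :=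
  ⟨fun n hn g => ⟨hA.conj_mem n hn.1 g, hB.conj_mem n hn.2 g⟩⟩

lemma finset_inf_normal_finiteIndex (S : Finset (FinQuot G)) :
    (S.inf fun q => q.1).Normal ∧ (S.inf fun q => q.1).FiniteIndex := by
  classical
  induction S using Finset.induction_on with
  | empty => exact ⟨by rw [Finset.inf_empty]; infer_instance,
      by rw [Finset.inf_empty]; infer_instance⟩
  | @insert a S ha ih =>
    rw [Finset.inf_insert]
    haveI := ih.2
    haveI := a.2.2
    exact ⟨normal_inf a.2.1 ih.1, by exact inferInstance⟩


end Coherence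

/-- Claim (2.9) in the proof of Lemma 2.8: in the free profinite group `𝔉(X)` on a
finite set `X` with `|X| > 1`, the centralizer of `xᵐ` for a free generator
`x ∈ X` and a positive integer `m` is the closure of the (pro)cyclic subgroup
`⟨x⟩`. -/
theorem centralizer_of_power_of_generator (X : Type) [Finite X] (hX : 1 < Nat.card X)
    (x : X) (m : ℕ) (hm : 0 < m) :
    Subgroup.centralizer {(unit (FreeGroup X) (FreeGroup.of x)) ^ m}
      = (Subgroup.zpowers (unit (FreeGroup X) (FreeGroup.of x))).topologicalClosure := by
  classical
  set F := FreeGroup X with hF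
  set u := unit F (FreeGroup.of x) with hu
  apply le_antisymm
  · -- hard direction
    intro g hg
    have hcomm : u ^ m * g = g * u ^ m :=
      Subgroup.mem_centralizer_iff.1 hg (u ^ m) (Set.mem_singleton _)
    show g ∈ (Subgroup.zpowers u).topologicalClosure
    rw [← SetLike.mem_coe, Subgroup.topologicalClosure_coe, closure_subtype,
      mem_closure_iff_nhds]
    intro U hU
    rw [nhds_pi, Filter.mem_pi] at hU
    obtain ⟨I, hIfin, tset, ht, hsub⟩ := hU
    set S := hIfin.toFinset with hS
    obtain ⟨hnorm, hfi⟩ := finset_inf_normal_finiteIndex (G := F) S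
    set Ninf : FinQuot F := ⟨S.inf fun q => q.1, hnorm, hfi⟩ with hNinfdef
    haveI : (Ninf.1).Normal := hnorm
    haveI : (Ninf.1).FiniteIndex := hfi
    obtain ⟨M, hMnorm, hMfi, hMle, hMkey⟩ := key X x m hm Ninf.1
    set Mq : FinQuot F := ⟨M, hMnorm, hMfi⟩ with hMqdef
    -- coercion of u ^ m
    have hum : (↑(u ^ m) : ∀ N' : FinQuot F, F ⧸ N'.1)
        = toFinQuots F (FreeGroup.of x ^ m) := by
      rw [SubmonoidClass.coe_pow, map_pow]
      rfl
    -- commutation at coordinate Mq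
    have hcm := congrArg (fun z : ProfComp F => (↑z : ∀ N' : FinQuot F, F ⧸ N'.1) Mq) hcomm
    simp only [Subgroup.coe_mul, Pi.mul_apply, hum] at hcm
    obtain ⟨f, hf⟩ := QuotientGroup.mk'_surjective M ((g : ∀ N' : FinQuot F, F ⧸ N'.1) Mq)
    have hfm : (f * FreeGroup.of x ^ m)⁻¹ * (FreeGroup.of x ^ m * f) ∈ M := by
      rw [← QuotientGroup.eq]
      show QuotientGroup.mk' M (f * FreeGroup.of x ^ m)
        = QuotientGroup.mk' M (FreeGroup.of x ^ m * f)
      rw [map_mul, map_mul, hf]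
      exact hcm.symm
    obtain ⟨tt, htt⟩ := hMkey f hfm
    set w := FreeGroup.of x ^ tt with hw
    have hc1 : Mq.1 ≤ Subgroup.comap (MonoidHom.id F) Ninf.1 := by
      exact hMle
    have hNinfval : (g : ∀ N' : FinQuot F, F ⧸ N'.1) Ninf = QuotientGroup.mk' Ninf.1 w := by
      rw [← coherence g hMle hc1, ← hf, QuotientGroup.map_mk']
      show QuotientGroup.mk' Ninf.1 f = _
      rw [htt, hw, map_pow]
    have hi : ∀ i ∈ I, (g : ∀ N' : FinQuot F, F ⧸ N'.1) i = toFinQuots F w i := by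
      intro i hiI
      have hle : Ninf.1 ≤ i.1 := Finset.inf_le (hIfin.mem_toFinset.2 hiI)
      have hc2 : Ninf.1 ≤ Subgroup.comap (MonoidHom.id F) i.1 := by simpa using hle
      rw [← coherence g hle hc2, hNinfval, QuotientGroup.map_mk']
      rfl
    refine ⟨(↑(u ^ tt) : ∀ N' : FinQuot F, F ⧸ N'.1), ?_, ?_⟩
    · apply hsub
      intro i hiI
      have hcoe : (↑(u ^ tt) : ∀ N' : FinQuot F, F ⧸ N'.1) = toFinQuots F w := by
        rw [SubmonoidClass.coe_pow, hw, map_pow]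
        rfl
      rw [hcoe, ← hi i hiI]
      exact mem_of_mem_nhds (ht i)
    · exact ⟨u ^ tt, ⟨(tt : ℤ), by simp⟩, rfl⟩
  · -- easy direction
    refine Subgroup.topologicalClosure_minimal _ ?_ ?_
    · rw [Subgroup.zpowers_le]
      refine Subgroup.mem_centralizer_iff.2 fun h hh => ?_
      rw [Set.mem_singleton_iff] at hh
      subst hh
      exact ((Commute.refl u).pow_left m).eq
    · have hset : (Subgroup.centralizer {u ^ m} : Set (ProfComp F))
          = {z | u ^ m * z = z * u ^ m} := by
        ext z
        simp [Subgroup.mem_centralizer_iff]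
      rw [hset]
      exact isClosed_eq (continuous_const.mul continuous_id) (continuous_id.mul continuous_const)

end CSP
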